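/- For all nonnegative integers m and positive integers k, the alternating sum over j from 0 to m of (-1)^j times the elementary symmetric function e_{m-j} times the Schur function s_{(j+2,2^{k-1})} equals the Schur function s_{(2^k,1^m)}. -/

import Mathlib

open Finset

/-- `h_m` for an integer index `m`, zero for negative `m`. -/
noncomputable def hZ (N : ℕ) (m : ℤ) : MvPolynomial (Fin N) ℤ :=
  if 0 ≤ m then MvPolynomial.hsymm (Fin N) ℤ m.toNat else 0

/-- The Schur polynomial of a partition `lam` (given as a list of its parts, in
weakly decreasing order), defined by the Jacobi–Trudi determinant
`s_λ = det (h_{λ_i - i + j})`. -/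
noncomputable def schur (N : ℕ) (lam : List ℕ) : MvPolynomial (Fin N) ℤ :=
  Matrix.det (Matrix.of fun i j : Fin lam.length =>
    hZ N ((lam.get i : ℤ) - (i : ℤ) + (j : ℤ)))

namespace JTaux

open MvPolynomial

abbrev R (N : ℕ) := MvPolynomial (Fin N) ℤ

noncomputable def hh (N n : ℕ) : R N := hsymm (Fin N) ℤ n
noncomputable def ee (N n : ℕ) : R N := esymm (Fin N) ℤ n

lemma hZ_neg {N : ℕ} {m : ℤ} (hm : m < 0) : hZ N m = 0 := if_neg (by omega)

lemma hZ_zero' (N : ℕ) : hZ N 0 = 1 := by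
  rw [hZ, if_pos le_rfl]
  simp [MvPolynomial.hsymm_zero]

lemma hZ_cast (N n : ℕ) : hZ N (n : ℤ) = hh N n := by
  rw [hZ, if_pos (by positivity), hh, Int.toNat_natCast]

/-! ### The generating function identity `E(-t) H(t) = 1` -/

noncomputable def Fs (N : ℕ) : PowerSeries (R N) :=
  ∏ i : Fin N, (1 - PowerSeries.C (R := R N) (X i) * PowerSeries.X)
noncomputable def Gs (N : ℕ) : PowerSeries (R N) :=
  ∏ i : Fin N, PowerSeries.mk (fun t => X i ^ t)

lemma FG (N : ℕ) : Fs N * Gs N = 1 := by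
  rw [Fs, Gs, ← Finset.prod_mul_distrib]
  apply Finset.prod_eq_one
  intro i _
  ext n
  rw [sub_mul, one_mul, map_sub]
  have hc : PowerSeries.C (R := R N) (X i) * PowerSeries.X * PowerSeries.mk (fun t => X i ^ t)
      = PowerSeries.X * (PowerSeries.C (R := R N) (X i) * PowerSeries.mk (fun t => X i ^ t)) := by ring
  rw [hc]
  cases n with
  | zero => simp
  | succ n =>
      simp [PowerSeries.coeff_succ_X_mul, PowerSeries.coeff_mk, pow_succ, mul_comm]

lemma coeff_F (N j : ℕ) : PowerSeries.coeff (R := R N) j (Fs N) = (-1) ^ j * ee N j := by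
  have h1 : Fs N = ∑ t ∈ (univ : Finset (Fin N)).powerset,
      PowerSeries.C (R := R N) ((-1 : R N) ^ t.card * ∏ i ∈ t, X i) * (PowerSeries.X) ^ t.card := by
    rw [Fs]
    have h0 : ∀ i : Fin N, (1 - PowerSeries.C (R := R N) (X i) * PowerSeries.X)
        = (-(PowerSeries.C (R := R N) (X i)) * PowerSeries.X + 1) := by intro i; ring
    simp_rw [h0]
    rw [Finset.prod_add]
    refine Finset.sum_congr rfl fun t _ => ?_
    rw [Finset.prod_const_one, mul_one, Finset.prod_mul_distrib, Finset.prod_const]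
    congr 1
    have h2 : ∀ i ∈ t, -(PowerSeries.C (R := R N) (X i)) = (-1) * PowerSeries.C (R := R N) (X i) := by
      intro i _; ring
    rw [Finset.prod_congr rfl h2, Finset.prod_mul_distrib, Finset.prod_const, map_mul, map_pow,
      map_neg, map_one, ← map_prod]
  rw [h1, map_sum]
  simp_rw [PowerSeries.coeff_C_mul, PowerSeries.coeff_X_pow]
  rw [ee, esymm, Finset.powersetCard_eq_filter, Finset.sum_filter, Finset.mul_sum]
  refine Finset.sum_congr rfl fun t _ => ?_
  by_cases h : t.card = j
  · rw [if_pos (h.symm), if_pos h, h, mul_one]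
  · rw [if_neg (fun hh => h hh.symm), if_neg h, mul_zero, mul_zero]

lemma toMultiset_map_prod {α M : Type*} [DecidableEq α] [CommMonoid M] (l : α →₀ ℕ) (g : α → M) :
    ((Finsupp.toMultiset l).map g).prod = l.prod fun a n => g a ^ n := by
  induction l using Finsupp.induction with
  | zero => simp
  | single_add a n f han hn ih =>
      rw [Finsupp.toMultiset_add, Multiset.map_add, Multiset.prod_add, ih,
        Finsupp.toMultiset_single, Finsupp.prod_add_index (by simp) (by intros; rw [pow_add]),
        Multiset.nsmul_singleton, Multiset.map_replicate, Multiset.prod_replicate]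
      simp [Finsupp.prod_single_index]

lemma sum_univ_toMultiset {α : Type*} [Fintype α] [DecidableEq α] (l : α →₀ ℕ) :
    ∑ i, l i = Multiset.card (Finsupp.toMultiset l) := by
  rw [Finsupp.card_toMultiset, Finsupp.sum_fintype _ _ (fun _ => rfl)]
  rfl

lemma coeff_G (N n : ℕ) : PowerSeries.coeff (R := R N) n (Gs N) = hh N n := by
  rw [Gs, PowerSeries.coeff_prod, hh, hsymm]
  refine Finset.sum_bij (fun l hl => (⟨Finsupp.toMultiset l, ?_⟩ : Sym (Fin N) n)) ?_ ?_ ?_ ?_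
  · rw [← sum_univ_toMultiset]
    exact (Finset.mem_finsuppAntidiag.mp hl).1
  · intro l hl; exact Finset.mem_univ _
  · intro l1 h1 l2 h2 heq
    have h : Finsupp.toMultiset l1 = Finsupp.toMultiset l2 := congrArg Subtype.val heq
    rw [← Finsupp.toMultiset_toFinsupp l1, h, Finsupp.toMultiset_toFinsupp]
  · intro s _
    refine ⟨Multiset.toFinsupp s.val, ?_, ?_⟩
    · rw [Finset.mem_finsuppAntidiag]
      refine ⟨?_, Finset.subset_univ _⟩
      have h3 : ∑ i, (Multiset.toFinsupp s.val) i = n := by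
        rw [sum_univ_toMultiset, Multiset.toFinsupp_toMultiset]
        exact s.2
      exact h3
    · apply Subtype.ext
      simp
  · intro l hl
    rw [toMultiset_map_prod]
    rw [Finsupp.prod_fintype _ _ (by intro; simp)]
    refine Finset.prod_congr rfl fun i _ => ?_
    rw [PowerSeries.coeff_mk]

lemma EH (N : ℕ) (n : ℕ) (hn : 1 ≤ n) :
    ∑ i ∈ range (n + 1), (-1 : R N) ^ i * ee N i * hh N (n - i) = 0 := by
  have h1 := congrArg (PowerSeries.coeff (R := R N) n) (FG N)
  rw [PowerSeries.coeff_mul, Finset.Nat.sum_antidiagonal_eq_sum_range_succ_mk] at h1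
  simp only [coeff_F, coeff_G, PowerSeries.coeff_one] at h1
  rw [if_neg (by omega : ¬ n = 0)] at h1
  rw [← h1]

lemma HE (N : ℕ) (n : ℕ) (hn : 1 ≤ n) :
    ∑ i ∈ range (n + 1), (-1 : R N) ^ i * hh N i * ee N (n - i) = 0 := by
  rw [← Finset.sum_range_reflect (fun i => (-1 : R N) ^ i * hh N i * ee N (n - i)) (n + 1)]
  have key : ∀ j ∈ range (n + 1),
      (-1 : R N) ^ (n + 1 - 1 - j) * hh N (n + 1 - 1 - j) * ee N (n - (n + 1 - 1 - j))
      = (-1) ^ n * ((-1) ^ j * ee N j * hh N (n - j)) := by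
    intro j hj
    rw [Finset.mem_range] at hj
    have e1 : n + 1 - 1 - j = n - j := by omega
    have e2 : n - (n - j) = j := by omega
    rw [e1, e2]
    have h6 : (-1 : R N) ^ (n - j) = (-1) ^ n * (-1) ^ j := by
      calc (-1 : R N) ^ (n - j) = (-1) ^ (n - j) * ((-1) ^ 2) ^ j := by
            rw [neg_one_sq, one_pow, mul_one]
        _ = (-1) ^ (n - j + 2 * j) := by rw [← pow_mul, ← pow_add]
        _ = (-1) ^ (n + j) := by congr 1; omega
        _ = (-1) ^ n * (-1) ^ j := pow_add _ _ _
    rw [h6]; ring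
  rw [Finset.sum_congr rfl key, ← Finset.mul_sum, EH N n hn, mul_zero]

lemma e_rec (N : ℕ) (n : ℕ) (hn : 1 ≤ n) :
    ee N n = ∑ r ∈ range n, (-1 : R N) ^ r * hh N (r + 1) * ee N (n - 1 - r) := by
  have h := HE N n hn
  rw [Finset.sum_range_succ'] at h
  simp only [pow_zero, one_mul, Nat.sub_zero] at h
  have hh0 : hh N 0 = 1 := by simp [hh, hsymm_zero]
  rw [hh0, one_mul] at h
  have h5 : ee N n = -∑ i ∈ range n, (-1 : R N) ^ (i + 1) * hh N (i + 1) * ee N (n - (i + 1)) := by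
    linear_combination h
  rw [h5, ← Finset.sum_neg_distrib]
  refine Finset.sum_congr rfl fun i hi => ?_
  have h7 : n - (i + 1) = n - 1 - i := by omega
  rw [h7, pow_succ]
  ring

/-! ### The Jacobi–Trudi determinants -/

lemma schur_eq_det (N : ℕ) (lam : List ℕ) (n : ℕ) (h : lam.length = n) (f : Fin n → ℤ)
    (hf : ∀ i : Fin n, ((lam.get (Fin.cast h.symm i) : ℤ) - (i : ℤ)) = f i) :
    schur N lam = Matrix.det (Matrix.of fun i j : Fin n => hZ N (f i + (j : ℤ))) := by
  subst h
  rw [schur]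
  congr 1
  funext i j
  rw [Matrix.of_apply, Matrix.of_apply, ← hf i]
  rfl

noncomputable def Dm (N n k a : ℕ) : Matrix (Fin n) (Fin n) (R N) :=
  Matrix.of fun i j => hZ N ((if (i : ℕ) < k then (2:ℤ) else 1) - (i : ℕ) + (j : ℕ)
    + (if (j : ℕ) = n - 1 then (a : ℤ) else 0))

lemma det_Dm_base (N k a : ℕ) (hk : 1 ≤ k) :
    (Dm N k k a).det = schur N ((a + 2) :: List.replicate (k - 1) 2) := by
  rw [schur_eq_det N _ k (by simp [List.length_replicate]; omega)
    (fun i => (if (i : ℕ) = 0 then (a : ℤ) + 2 else 2) - (i : ℕ)) ?hf]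
  case hf =>
    intro i
    have hget : (((a + 2) :: List.replicate (k - 1) 2).get
        (Fin.cast (by simp [List.length_replicate]; omega :
          (((a + 2) :: List.replicate (k - 1) 2).length = k)).symm i))
        = if (i : ℕ) = 0 then a + 2 else 2 := by
      obtain ⟨iv, hiv⟩ := i
      cases iv with
      | zero => rfl
      | succ n =>
          have hn : n < (List.replicate (k - 1) (2 : ℕ)).length := by simp; omega
          show (List.replicate (k - 1) (2 : ℕ)).get ⟨n, hn⟩ = _
          rw [List.get_eq_getElem, List.getElem_replicate]
          exact (if_neg (Nat.succ_ne_zero n)).symm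
    rw [hget]
    beta_reduce
    by_cases h0 : (i : ℕ) = 0
    · rw [if_pos h0, if_pos h0]; push_cast; ring
    · rw [if_neg h0, if_neg h0]; push_cast; ring
  · have h1 : (Matrix.of fun i j : Fin k =>
        hZ N ((if (i : ℕ) = 0 then (a : ℤ) + 2 else 2) - (i : ℕ) + (j : ℕ)))
        = ((Dm N k k a).transpose).submatrix Fin.revPerm Fin.revPerm := by
      funext i j
      simp only [Matrix.submatrix_apply, Matrix.transpose_apply, Dm, Matrix.of_apply,
        Fin.revPerm_apply]
      have hi := i.isLt
      have hj := j.isLt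
      have hri : (Fin.rev i : ℕ) = k - 1 - (i : ℕ) := by rw [Fin.val_rev]; omega
      have hrj : (Fin.rev j : ℕ) = k - 1 - (j : ℕ) := by rw [Fin.val_rev]; omega
      rw [hri, hrj, if_pos (by omega : k - 1 - (j : ℕ) < k)]
      rcases Nat.eq_zero_or_pos (i : ℕ) with h0 | h0
      · rw [if_pos h0, if_pos (by omega : k - 1 - (i : ℕ) = k - 1)]
        congr 1
        omega
      · rw [if_neg (by omega : ¬ (i : ℕ) = 0), if_neg (by omega : ¬ k - 1 - (i : ℕ) = k - 1)]
        congr 1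
        omega
    rw [h1, Matrix.det_submatrix_equiv_self, Matrix.det_transpose]

lemma minor_last (N p k a : ℕ) :
    (Dm N (p + 2) k a).submatrix (Fin.last (p+1)).succAbove (Fin.last (p+1)).succAbove
      = Dm N (p + 1) k 0 := by
  rw [Fin.succAbove_last]
  funext i j
  have hi := i.isLt
  have hj := j.isLt
  simp only [Dm, Matrix.of_apply, Matrix.submatrix_apply, Fin.coe_castSucc]
  congr 1
  split_ifs <;> push_cast <;> omega

lemma minor_pen (N p k a : ℕ) :
    (Dm N (p + 2) k a).submatrix (Fin.last (p+1)).succAbove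
        ((Fin.last p).castSucc).succAbove
      = Dm N (p + 1) k (a + 1) := by
  rw [Fin.succAbove_last]
  funext i j
  have hi := i.isLt
  have hj := j.isLt
  rcases lt_or_ge (j : ℕ) p with hlt | hge
  · have hc : ((Fin.last p).castSucc).succAbove j = j.castSucc := by
      apply Fin.succAbove_of_castSucc_lt
      rw [Fin.lt_def]
      simpa using hlt
    rw [Matrix.submatrix_apply, hc]
    simp only [Dm, Matrix.of_apply, Fin.coe_castSucc]
    congr 1
    split_ifs <;> push_cast <;> omega
  · have hc : ((Fin.last p).castSucc).succAbove j = j.succ := by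
      apply Fin.succAbove_of_le_castSucc
      rw [Fin.le_def]
      simpa using hge
    rw [Matrix.submatrix_apply, hc]
    simp only [Dm, Matrix.of_apply, Fin.coe_castSucc, Fin.val_succ]
    congr 1
    split_ifs <;> push_cast <;> omega

lemma det_Dm_succ (N p k a : ℕ) (hkp : k ≤ p + 1) :
    (Dm N (p + 2) k a).det
      = hZ N ((a : ℤ) + 1) * (Dm N (p + 1) k 0).det - (Dm N (p + 1) k (a + 1)).det := by
  rw [show p + 2 = (p + 1).succ from rfl] at *
  rw [Matrix.det_succ_row (Dm N (p+1).succ k a) (Fin.last (p+1))]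
  rw [Fin.sum_univ_castSucc, Fin.sum_univ_castSucc]
  have hzero : ∀ j : Fin p,
      (-1 : R N) ^ (((Fin.last (p+1) : Fin (p+2)) : ℕ) + ((j.castSucc.castSucc : Fin (p+2)) : ℕ))
        * (Dm N (p+1).succ k a) (Fin.last (p+1)) j.castSucc.castSucc
        * ((Dm N (p+1).succ k a).submatrix (Fin.last (p+1)).succAbove
            (j.castSucc.castSucc).succAbove).det = 0 := by
    intro j
    have hj := j.isLt
    have h8 : (Dm N (p+1).succ k a) (Fin.last (p+1)) j.castSucc.castSucc = 0 := by
      show hZ N _ = 0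
      rw [if_neg (by simp; omega : ¬ ((j.castSucc.castSucc : Fin (p+2)) : ℕ) = p + 2 - 1)]
      apply hZ_neg
      rw [if_neg (by simp; omega : ¬ ((Fin.last (p+1) : Fin (p+2)) : ℕ) < k)]
      simp only [Fin.coe_castSucc, Fin.val_last]
      push_cast
      omega
    rw [h8, mul_zero, zero_mul]
  rw [Finset.sum_eq_zero (fun j _ => hzero j), zero_add]
  have hpen : (Dm N (p+1).succ k a) (Fin.last (p+1)) ((Fin.last p).castSucc) = 1 := by
    show hZ N _ = 1
    rw [if_neg (by simp : ¬ (((Fin.last p).castSucc : Fin (p+2)) : ℕ) = p + 2 - 1),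
      if_neg (by simp; omega : ¬ ((Fin.last (p+1) : Fin (p+2)) : ℕ) < k)]
    rw [show (1 - ((Fin.last (p+1) : Fin (p+2)) : ℕ) + (((Fin.last p).castSucc : Fin (p+2)) : ℕ)
        + 0 : ℤ) = 0 by simp]
    exact hZ_zero' N
  have hlastentry : (Dm N (p+1).succ k a) (Fin.last (p+1)) (Fin.last (p+1)) = hZ N ((a:ℤ)+1) := by
    show hZ N _ = _
    congr 1
    rw [if_pos (by simp : ((Fin.last (p+1) : Fin (p+2)) : ℕ) = p + 2 - 1),
      if_neg (by simp; omega : ¬ ((Fin.last (p+1) : Fin (p+2)) : ℕ) < k)]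
    simp only [Fin.val_last]
    push_cast
    ring
  have hs1 : (-1 : R N) ^ (((Fin.last (p+1) : Fin (p+2)) : ℕ)
      + (((Fin.last p).castSucc : Fin (p+2)) : ℕ)) = -1 := by
    have h9 : ((Fin.last (p+1) : Fin (p+2)) : ℕ) + (((Fin.last p).castSucc : Fin (p+2)) : ℕ)
        = 2 * p + 1 := by simp [Fin.val_last]; try omega
    rw [h9]
    exact Odd.neg_one_pow ⟨p, by ring⟩
  have hs2 : (-1 : R N) ^ (((Fin.last (p+1) : Fin (p+2)) : ℕ)
      + ((Fin.last (p+1) : Fin (p+2)) : ℕ)) = 1 := by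
    exact Even.neg_one_pow ⟨p + 1, by simp⟩
  rw [hpen, hlastentry, hs1, hs2, minor_pen, minor_last]
  ring

/-! ### Induction -/

noncomputable def Tf (N k a : ℕ) : R N := schur N ((a + 2) :: List.replicate (k - 1) 2)
noncomputable def Sd (N k m : ℕ) : R N := (Dm N (k + m) k 0).det

lemma lemA (N k : ℕ) (hk : 1 ≤ k) (m : ℕ) : ∀ a : ℕ, (Dm N (k + m) k a).det
    = ∑ r ∈ range m, (-1 : R N) ^ r * hh N (a + 1 + r) * Sd N k (m - 1 - r)
      + (-1) ^ m * Tf N k (a + m) := by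
  induction m with
  | zero =>
      intro a
      simp only [range_zero, Finset.sum_empty, pow_zero, one_mul, zero_add, Nat.add_zero]
      rw [det_Dm_base N k a hk, Tf]
  | succ m ih =>
      intro a
      have hp : k + (m + 1) = (k + m - 1) + 2 := by omega
      have hq : (k + m - 1) + 1 = k + m := by omega
      rw [hp, det_Dm_succ N (k + m - 1) k a (by omega), hq, ih (a + 1)]
      have hcast : hZ N ((a : ℤ) + 1) = hh N (a + 1) := by
        rw [show ((a : ℤ) + 1) = ((a + 1 : ℕ) : ℤ) by push_cast; ring, hZ_cast]
      rw [hcast]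
      rw [Finset.sum_range_succ']
      have hterm : ∀ r ∈ range m,
          (-1 : R N) ^ (r + 1) * hh N (a + 1 + (r + 1)) * Sd N k (m + 1 - 1 - (r + 1))
          = -((-1 : R N) ^ r * hh N (a + 1 + 1 + r) * Sd N k (m - 1 - r)) := by
        intro r hr
        rw [show a + 1 + (r + 1) = a + 1 + 1 + r by omega,
          show m + 1 - 1 - (r + 1) = m - 1 - r by omega, pow_succ]
        ring
      rw [Finset.sum_congr rfl hterm, Finset.sum_neg_distrib]
      rw [show a + (m + 1) = a + 1 + m by omega]
      have hSd : (Dm N (k + m) k 0).det = Sd N k m := rfl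
      rw [hSd]
      rw [show m + 1 - 1 - 0 = m by omega, show a + 1 + 0 = a + 1 by omega]
      ring

lemma lemB (N k : ℕ) (hk : 1 ≤ k) (m : ℕ) :
    Sd N k m = ∑ r ∈ range m, (-1 : R N) ^ r * hh N (r + 1) * Sd N k (m - 1 - r)
      + (-1) ^ m * Tf N k m := by
  have h := lemA N k hk m 0
  rw [Sd, h]
  refine congrArg₂ (· + ·) ?_ ?_
  · refine Finset.sum_congr rfl fun r _ => ?_
    rw [show 0 + 1 + r = r + 1 by omega]
  · rw [Nat.zero_add]

lemma sum_triangle {M : Type*} [AddCommMonoid M] (m : ℕ) (f : ℕ → ℕ → M) :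
    ∑ r ∈ range m, ∑ j ∈ range (m - r), f r j
      = ∑ j ∈ range m, ∑ r ∈ range (m - j), f r j := by
  have h : ∀ (g : ℕ → ℕ → M), ∑ r ∈ range m, ∑ j ∈ range (m - r), g r j
      = ∑ r ∈ range m, ∑ j ∈ range m, if r + j < m then g r j else 0 := by
    intro g
    refine Finset.sum_congr rfl fun r hr => ?_
    rw [Finset.mem_range] at hr
    rw [show range (m - r) = (range m).filter (fun j => r + j < m) by
      ext x; simp [Finset.mem_filter, Finset.mem_range]; omega]
    rw [Finset.sum_filter]
  rw [h f, h (fun a b => f b a), Finset.sum_comm]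
  refine Finset.sum_congr rfl fun j _ => Finset.sum_congr rfl fun r _ => ?_
  rw [Nat.add_comm]

lemma lemC (N k : ℕ) (hk : 1 ≤ k) (m : ℕ) :
    Sd N k m = ∑ j ∈ range (m + 1), (-1 : R N) ^ j * ee N (m - j) * Tf N k j := by
  induction m using Nat.strong_induction_on with
  | _ m ih =>
    rcases Nat.eq_zero_or_pos m with h0 | h0
    · subst h0
      rw [lemB N k hk 0]
      simp only [range_zero, Finset.sum_empty, pow_zero, one_mul, zero_add,
        Finset.sum_range_one, Nat.sub_zero]
      rw [show ee N 0 = 1 by simp [ee, esymm_zero], one_mul]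
    · rw [lemB N k hk m]
      have hrw : ∀ r ∈ range m,
          (-1 : R N) ^ r * hh N (r + 1) * Sd N k (m - 1 - r)
          = ∑ j ∈ range (m - r), (-1 : R N) ^ r * hh N (r + 1)
              * ((-1) ^ j * ee N (m - 1 - r - j) * Tf N k j) := by
        intro r hr
        rw [Finset.mem_range] at hr
        rw [ih (m - 1 - r) (by omega), Finset.mul_sum]
        rw [show m - 1 - r + 1 = m - r by omega]
      rw [Finset.sum_congr rfl hrw, sum_triangle]
      rw [Finset.sum_range_succ]
      rw [show m - m = 0 by omega, show ee N 0 = 1 by simp [ee, esymm_zero]]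
      have hinner : ∀ j ∈ range m,
          ∑ r ∈ range (m - j), (-1 : R N) ^ r * hh N (r + 1)
              * ((-1) ^ j * ee N (m - 1 - r - j) * Tf N k j)
          = (-1 : R N) ^ j * ee N (m - j) * Tf N k j := by
        intro j hj
        rw [Finset.mem_range] at hj
        have h1 : ∀ r ∈ range (m - j),
            (-1 : R N) ^ r * hh N (r + 1) * ((-1) ^ j * ee N (m - 1 - r - j) * Tf N k j)
            = ((-1 : R N) ^ j * Tf N k j)
                * ((-1) ^ r * hh N (r + 1) * ee N ((m - j) - 1 - r)) := by
          intro r hr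
          rw [show m - 1 - r - j = (m - j) - 1 - r by omega]
          ring
        rw [Finset.sum_congr rfl h1, ← Finset.mul_sum, ← e_rec N (m - j) (by omega)]
        ring
      rw [Finset.sum_congr rfl hinner]
      ring

lemma schur_rhs (N k m : ℕ) (hk : 1 ≤ k) :
    schur N (List.replicate k 2 ++ List.replicate m 1) = Sd N k m := by
  rw [schur_eq_det N _ (k + m) (by simp) (fun i => (if (i : ℕ) < k then (2:ℤ) else 1) - (i : ℕ)) ?hf]
  case hf =>
    intro i
    have hlen : ((List.replicate k (2:ℕ) ++ List.replicate m 1).length = k + m) := by simp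
    by_cases hik : (i : ℕ) < k
    · have hget : (List.replicate k (2:ℕ) ++ List.replicate m 1).get (Fin.cast hlen.symm i)
          = 2 := by
        rw [List.get_eq_getElem, List.getElem_append_left (by simpa using hik)]
        exact List.getElem_replicate ..
      rw [hget]
      beta_reduce
      rw [if_pos hik]
      push_cast; ring
    · have hge : k ≤ (i : ℕ) := by omega
      have hget : (List.replicate k (2:ℕ) ++ List.replicate m 1).get (Fin.cast hlen.symm i)
          = 1 := by
        rw [List.get_eq_getElem, List.getElem_append_right (by simpa using hge)]
        exact List.getElem_replicate ..
      rw [hget]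
      beta_reduce
      rw [if_neg hik]
      push_cast; ring
  · rw [Sd, Dm]
    congr 1
    funext i j
    rw [Matrix.of_apply, Matrix.of_apply]
    congr 1
    beta_reduce
    split_ifs <;> push_cast <;> ring

end JTaux

/-- For all `m ≥ 0` and `k ≥ 1`,
`∑_{j=0}^{m} (-1)^j e_{m-j} s_{(j+2,2^{k-1})} = s_{(2^k,1^m)}`,
as an identity of symmetric polynomials in any number `N` of variables. -/
theorem stmt0 (N m k : ℕ) (hk : 1 ≤ k) :
    ∑ j ∈ Finset.range (m + 1),
      (-1 : MvPolynomial (Fin N) ℤ) ^ j * MvPolynomial.esymm (Fin N) ℤ (m - j) *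
        schur N ((j + 2) :: List.replicate (k - 1) 2) =
    schur N (List.replicate k 2 ++ List.replicate m 1) := by
  rw [JTaux.schur_rhs N k m hk, JTaux.lemC N k hk m]
  rfl
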